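/- arXiv:2510.03352 — 5 statements merged into one kernel-verified Lean document; each statement's English description precedes it below -/
import Mathlib

section
/- Let (X0, X_t, X_{t+1}, Y, S) be random variables such that (i) S is conditionally independent of (X_t, X_{t+1}, Y) given X0, (ii) X0 is conditionally independent of X_{t+1} given (X_t, Y), and (iii) the conditional density of S given X0 = x0 is proportional (in x0, for fixed s) to exp(r(x0; s)/τ). Then the conditional density of X_t given (X_{t+1}, Y, S) satisfies p(x_t | x_{t+1}, y, s) ∝ p(x_t | x_{t+1}, y) · E[exp(r(X0; s)/τ) | X_t = x_t, Y = y], where the proportionality constant depends only on (x_{t+1}, y, s). -/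
open MeasureTheory

/-- Reward-tilted conditional posterior for the reverse diffusion step.
With joint density `p(x0,xt,xt1,y,s) = g(x0,s)·h(x0,xt,xt1,y)` (S ⟂ (Xt,Xt1,Y) | X0),
`h(x0,xt,xt1,y) = a(x0,xt,y)·b(xt,xt1,y)` (X0 ⟂ Xt1 | (Xt,Y)), and
`g(x0,s) = c(s)·exp(r(x0;s)/τ)`, the (unnormalized) conditional density of `Xt`
given `(Xt1,Y,S) = (xt1,y,s)` is proportional to
`p(xt | xt1, y) · E[exp(r(X0;s)/τ) | Xt = xt, Y = y]`,
the proportionality constant depending only on `(xt1, y, s)`. -/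
theorem stmt2 {d m k : ℕ}
    (p : EuclideanSpace ℝ (Fin d) → EuclideanSpace ℝ (Fin d) → EuclideanSpace ℝ (Fin d) →
      EuclideanSpace ℝ (Fin m) → EuclideanSpace ℝ (Fin k) → ℝ)
    (g : EuclideanSpace ℝ (Fin d) → EuclideanSpace ℝ (Fin k) → ℝ)
    (h : EuclideanSpace ℝ (Fin d) → EuclideanSpace ℝ (Fin d) → EuclideanSpace ℝ (Fin d) →
      EuclideanSpace ℝ (Fin m) → ℝ)
    (a : EuclideanSpace ℝ (Fin d) → EuclideanSpace ℝ (Fin d) → EuclideanSpace ℝ (Fin m) → ℝ)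
    (b : EuclideanSpace ℝ (Fin d) → EuclideanSpace ℝ (Fin d) → EuclideanSpace ℝ (Fin m) → ℝ)
    (c : EuclideanSpace ℝ (Fin k) → ℝ)
    (r : EuclideanSpace ℝ (Fin d) → EuclideanSpace ℝ (Fin k) → ℝ)
    (τ : ℝ) (hτ : 0 < τ)
    (hpnn : ∀ x0 xt xt1 y s, 0 ≤ p x0 xt xt1 y s)
    (hhnn : ∀ x0 xt xt1 y, 0 ≤ h x0 xt xt1 y)
    (hfac : ∀ x0 xt xt1 y s, p x0 xt xt1 y s = g x0 s * h x0 xt xt1 y)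
    (hg : ∀ x0 s, g x0 s = c s * Real.exp (r x0 s / τ))
    (hgnorm : ∀ x0, ∫ s, g x0 s = 1)
    (hcpos : ∀ s, 0 < c s)
    (hci : ∀ x0 xt xt1 y, h x0 xt xt1 y = a x0 xt y * b xt xt1 y)
    (xt1 : EuclideanSpace ℝ (Fin d)) (y : EuclideanSpace ℝ (Fin m))
    (s : EuclideanSpace ℝ (Fin k))
    (hden : ∀ xt, 0 < ∫ x0, ∫ xt1', h x0 xt xt1' y)
    (hden1 : 0 < ∫ xt, ∫ x0, h x0 xt xt1 y) :
    ∃ C : ℝ, 0 < C ∧ ∀ xt : EuclideanSpace ℝ (Fin d),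
      (∫ x0, p x0 xt xt1 y s)
        = C * ((∫ x0, h x0 xt xt1 y) / (∫ xt', ∫ x0, h x0 xt' xt1 y))
          * (∫ x0, Real.exp (r x0 s / τ) *
              ((∫ xt1', h x0 xt xt1' y) / (∫ x0', ∫ xt1', h x0' xt xt1' y))) := by

  have hAB : ∀ xt, (∫ x0, ∫ xt1', h x0 xt xt1' y)
      = (∫ x0, a x0 xt y) * (∫ xt1', b xt xt1' y) := by
    intro xt
    simp_rw [hci, MeasureTheory.integral_const_mul, integral_mul_const]
  have hH : ∀ xt, (∫ x0, h x0 xt xt1 y) = (∫ x0, a x0 xt y) * b xt xt1 y := by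
    intro xt
    simp_rw [hci, integral_mul_const]
  have hHx : ∀ (x0 : EuclideanSpace ℝ (Fin d)) xt, (∫ xt1', h x0 xt xt1' y)
      = a x0 xt y * (∫ xt1', b xt xt1' y) := by
    intro x0 xt
    simp_rw [hci, MeasureTheory.integral_const_mul]
  have hZ : 0 < ∫ xt, ∫ x0, h x0 xt xt1 y := hden1
  refine ⟨c s * (∫ xt, ∫ x0, h x0 xt xt1 y), mul_pos (hcpos s) hZ, fun xt => ?_⟩
  have hABpos : 0 < (∫ x0, a x0 xt y) * (∫ xt1', b xt xt1' y) := (hAB xt) ▸ hden xt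
  have hA0 : (∫ x0, a x0 xt y) ≠ 0 := fun h0 => by simp [h0] at hABpos
  have hB0 : (∫ xt1', b xt xt1' y) ≠ 0 := fun h0 => by simp [h0] at hABpos
  have hL : (∫ x0, p x0 xt xt1 y s)
      = (c s * b xt xt1 y) * ∫ x0, Real.exp (r x0 s / τ) * a x0 xt y := by
    rw [← MeasureTheory.integral_const_mul]
    congr 1
    funext x0
    rw [hfac, hg, hci]
    ring
  rw [hL, hH xt, hAB xt]
  have hI : (∫ x0, Real.exp (r x0 s / τ) *
        (a x0 xt y * (∫ xt1', b xt xt1' y) / ((∫ x0, a x0 xt y) * (∫ xt1', b xt xt1' y))))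
      = (∫ x0, Real.exp (r x0 s / τ) * a x0 xt y) / (∫ x0, a x0 xt y) := by
    rw [← integral_div]
    congr 1
    funext x0
    field_simp
  simp_rw [hHx, hI]
  have hZ0 : (∫ xt, ∫ x0, h x0 xt xt1 y) ≠ 0 := ne_of_gt hZ
  field_simp
end

section
/- Under the same conditional independence structure, the marginal conditional density of X_t given (Y, S) satisfies p(x_t | y, s) ∝ p(x_t | y) · exp(V_t^τ(x_t; s, y)), where V_t^τ(x_t; s, y) = log E[exp(r(X0; s)/τ) | X_t = x_t, Y = y] and the proportionality constant depends only on (y, s). -/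
open MeasureTheory

/-- Reward-tilted marginal conditional density: with joint density
`p(x0,xt,y,s) = g(x0,s)·h(x0,xt,y)` (S ⟂ (Xt,Y) | X0) and
`g(x0,s) = c(s)·exp(r(x0;s)/τ)`, the (unnormalized) conditional density of `Xt`
given `(Y,S) = (y,s)` is proportional to `p(xt|y)·exp(V_t^τ(xt;s,y))`, i.e. to
`p(xt|y) · E[exp(r(X0;s)/τ) | Xt = xt, Y = y]`, the constant depending only on `(y,s)`. -/
theorem stmt3 {d m k : ℕ}
    (p : EuclideanSpace ℝ (Fin d) → EuclideanSpace ℝ (Fin d) →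
      EuclideanSpace ℝ (Fin m) → EuclideanSpace ℝ (Fin k) → ℝ)
    (g : EuclideanSpace ℝ (Fin d) → EuclideanSpace ℝ (Fin k) → ℝ)
    (h : EuclideanSpace ℝ (Fin d) → EuclideanSpace ℝ (Fin d) → EuclideanSpace ℝ (Fin m) → ℝ)
    (c : EuclideanSpace ℝ (Fin k) → ℝ)
    (r : EuclideanSpace ℝ (Fin d) → EuclideanSpace ℝ (Fin k) → ℝ)
    (τ : ℝ) (hτ : 0 < τ)
    (hpnn : ∀ x0 xt y s, 0 ≤ p x0 xt y s)
    (hhnn : ∀ x0 xt y, 0 ≤ h x0 xt y)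
    (hfac : ∀ x0 xt y s, p x0 xt y s = g x0 s * h x0 xt y)
    (hg : ∀ x0 s, g x0 s = c s * Real.exp (r x0 s / τ))
    (hgnorm : ∀ x0, ∫ s, g x0 s = 1)
    (hcpos : ∀ s, 0 < c s)
    (y : EuclideanSpace ℝ (Fin m)) (s : EuclideanSpace ℝ (Fin k))
    (hden : ∀ xt, 0 < ∫ x0, h x0 xt y)
    (hdeny : 0 < ∫ xt, ∫ x0, h x0 xt y) :
    ∃ C : ℝ, 0 < C ∧ ∀ xt : EuclideanSpace ℝ (Fin d),
      (∫ x0, p x0 xt y s)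
        = C * ((∫ x0, h x0 xt y) / (∫ xt', ∫ x0, h x0 xt' y))
          * (∫ x0, Real.exp (r x0 s / τ) * (h x0 xt y / (∫ x0', h x0' xt y))) := by
  refine ⟨c s * (∫ xt', ∫ x0, h x0 xt' y), mul_pos (hcpos s) hdeny, fun xt => ?_⟩
  have hA : (∫ x0, h x0 xt y) ≠ 0 := (hden xt).ne'
  have hB : (∫ xt', ∫ x0, h x0 xt' y) ≠ 0 := hdeny.ne'
  have : (∫ x0, p x0 xt y s) = c s * ∫ x0, Real.exp (r x0 s / τ) * h x0 xt y := by
    rw [← integral_const_mul]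
    congr 1; ext x0
    rw [hfac, hg]; ring
  rw [this]
  have h2 : (∫ x0, Real.exp (r x0 s / τ) * (h x0 xt y / (∫ x0', h x0' xt y)))
      = (∫ x0, Real.exp (r x0 s / τ) * h x0 xt y) / (∫ x0', h x0' xt y) := by
    rw [← integral_div]
    congr 1; ext x0; ring
  rw [h2]
  field_simp
end

section
/- Let X0, X_t, Y have a joint density with Y conditionally independent of X_t given X0, with the Gaussian forward model X_t = √α X0 + √(1−α)Z, Z ∼ N(0,I) independent. Then the conditional mean of X0 given (X_t, Y) satisfies x̂_{0|t,Y}(x_t, y) = x̂_{0|t}(x_t) + ((1−α)/√α)·∇_{x_t} log p(y | x_t), where x̂_{0|t}(x_t) = E[X0 | X_t = x_t] and p(y | x_t) = E[p(y | X0) | X_t = x_t]. -/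
open MeasureTheory

/-- With `Y ⟂ X_t | X0` and the Gaussian forward model `X_t = √α X0 + √(1−α)Z`,
the conditional mean satisfies
`x̂_{0|t,Y}(x_t,y) = x̂_{0|t}(x_t) + ((1−α)/√α)·∇_{x_t} log p(y | x_t)`,
where `p(y|x_t) = E[p(y|X0) | X_t = x_t] = ptY(x_t)/pt(x_t)`. Differentiation under the
integral sign is assumed through `hgrad` and `hgradY`. -/
theorem stmt8 {d : ℕ}
    (p0 ℓ : EuclideanSpace ℝ (Fin d) → ℝ) (α : ℝ) (hα : α ∈ Set.Ioo (0:ℝ) 1)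
    (hp0 : ∀ x, 0 ≤ p0 x) (hp0meas : Measurable p0) (hp0int : ∫ x, p0 x = 1)
    (hℓnn : ∀ x, 0 ≤ ℓ x) (hℓmeas : Measurable ℓ)
    (gauss : EuclideanSpace ℝ (Fin d) → EuclideanSpace ℝ (Fin d) → ℝ)
    (hgauss : ∀ xt x0, gauss xt x0
      = (2 * Real.pi * (1 - α)) ^ (-(d : ℝ) / 2)
        * Real.exp (-‖xt - Real.sqrt α • x0‖ ^ 2 / (2 * (1 - α))))
    (pt ptY : EuclideanSpace ℝ (Fin d) → ℝ)
    (hpt : ∀ xt, pt xt = ∫ x0, p0 x0 * gauss xt x0)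
    (hptY : ∀ xt, ptY xt = ∫ x0, ℓ x0 * p0 x0 * gauss xt x0)
    (hint : ∀ xt, Integrable (fun x0 => (p0 x0 * gauss xt x0) • x0))
    (hintY : ∀ xt, Integrable (fun x0 => (ℓ x0 * p0 x0 * gauss xt x0) • x0))
    (hgrad : ∀ xt, HasGradientAt pt
      (∫ x0, ((1 - α)⁻¹ * (p0 x0 * gauss xt x0)) • (Real.sqrt α • x0 - xt)) xt)
    (hgradY : ∀ xt, HasGradientAt ptY
      (∫ x0, ((1 - α)⁻¹ * (ℓ x0 * p0 x0 * gauss xt x0)) • (Real.sqrt α • x0 - xt)) xt)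
    (xt : EuclideanSpace ℝ (Fin d)) (hpos : 0 < pt xt) (hposY : 0 < ptY xt) :
    (ptY xt)⁻¹ • (∫ x0, (ℓ x0 * p0 x0 * gauss xt x0) • x0)
      = (pt xt)⁻¹ • (∫ x0, (p0 x0 * gauss xt x0) • x0)
        + ((1 - α) / Real.sqrt α) •
            gradient (fun x => Real.log (ptY x / pt x)) xt := by
  obtain ⟨hα0, hα1⟩ := hα
  have hs : (0:ℝ) < Real.sqrt α := Real.sqrt_pos.2 hα0
  have h1α : (1:ℝ) - α ≠ 0 := by linarith
  have hptne : pt xt ≠ 0 := ne_of_gt hpos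
  have hptYne : ptY xt ≠ 0 := ne_of_gt hposY
  have hfi : Integrable (fun x0 : EuclideanSpace ℝ (Fin d) => p0 x0 * gauss xt x0) := by
    by_contra h
    rw [hpt xt, integral_undef h] at hpos
    exact lt_irrefl 0 hpos
  have hfiY : Integrable (fun x0 : EuclideanSpace ℝ (Fin d) => ℓ x0 * p0 x0 * gauss xt x0) := by
    by_contra h
    rw [hptY xt, integral_undef h] at hposY
    exact lt_irrefl 0 hposY
  have key : ∀ (f : EuclideanSpace ℝ (Fin d) → ℝ), Integrable (fun x0 => f x0 • x0) →
      Integrable f →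
      (∫ x0, ((1 - α)⁻¹ * f x0) • (Real.sqrt α • x0 - xt)) =
        (1 - α)⁻¹ • (Real.sqrt α • (∫ x0, f x0 • x0) - (∫ x0, f x0) • xt) := by
    intro f hf hfint
    have heq : ∀ x0 : EuclideanSpace ℝ (Fin d), ((1 - α)⁻¹ * f x0) • (Real.sqrt α • x0 - xt)
        = (1 - α)⁻¹ • (Real.sqrt α • (f x0 • x0) - f x0 • xt) := by
      intro x0
      module
    have h1 : Integrable (fun x0 : EuclideanSpace ℝ (Fin d) => Real.sqrt α • (f x0 • x0)) := by
      exact hf.smul (Real.sqrt α)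
    simp_rw [heq]
    rw [integral_smul, integral_sub h1 (hfint.smul_const xt), integral_smul,
      integral_smul_const]
  have hGY := key _ (hintY xt) hfiY
  have hG := key _ (hint xt) hfi
  set IY := ∫ x0, (ℓ x0 * p0 x0 * gauss xt x0) • x0 with hIY
  set I := ∫ x0, (p0 x0 * gauss xt x0) • x0 with hI
  set GY := ∫ x0, ((1 - α)⁻¹ * (ℓ x0 * p0 x0 * gauss xt x0)) • (Real.sqrt α • x0 - xt) with hGYdef
  set G := ∫ x0, ((1 - α)⁻¹ * (p0 x0 * gauss xt x0)) • (Real.sqrt α • x0 - xt) with hGdef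
  have hfdY : HasFDerivAt ptY (InnerProductSpace.toDual ℝ _ GY) xt := (hgradY xt).hasFDerivAt
  have hfd : HasFDerivAt pt (InnerProductSpace.toDual ℝ _ G) xt := (hgrad xt).hasFDerivAt
  have hlogdiff : HasFDerivAt (fun x => Real.log (ptY x) - Real.log (pt x))
      (InnerProductSpace.toDual ℝ _ ((ptY xt)⁻¹ • GY - (pt xt)⁻¹ • G)) xt := by
    have := (hfdY.log hptYne).sub (hfd.log hptne)
    simpa [map_sub, _root_.map_smul, Pi.sub_def] using this
  have hev : (fun x => Real.log (ptY x / pt x))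
      =ᶠ[nhds xt] (fun x => Real.log (ptY x) - Real.log (pt x)) := by
    have h1 : ∀ᶠ x in nhds xt, 0 < pt x :=
      (hfd.differentiableAt.continuousAt).eventually (eventually_gt_nhds hpos)
    have h2 : ∀ᶠ x in nhds xt, 0 < ptY x :=
      (hfdY.differentiableAt.continuousAt).eventually (eventually_gt_nhds hposY)
    filter_upwards [h1, h2] with x h1 h2
    rw [Real.log_div (ne_of_gt h2) (ne_of_gt h1)]
  have hfdlog : HasFDerivAt (fun x => Real.log (ptY x / pt x))
      (InnerProductSpace.toDual ℝ _ ((ptY xt)⁻¹ • GY - (pt xt)⁻¹ • G)) xt :=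
    hlogdiff.congr_of_eventuallyEq hev
  have hgradlog : gradient (fun x => Real.log (ptY x / pt x)) xt
      = (ptY xt)⁻¹ • GY - (pt xt)⁻¹ • G :=
    HasGradientAt.gradient (hasGradientAt_iff_hasFDerivAt.2 hfdlog)
  rw [hgradlog, hGY, hG, ← hptY xt, ← hpt xt]
  have hsne : Real.sqrt α ≠ 0 := ne_of_gt hs
  match_scalars <;> field_simp <;> ring
end

section
/- Let W be a random variable with values in [0,1], τ > 0, and let c_τ = e^{1/τ} − 1 − 1/τ. Then log E[exp(W/τ)] ≤ (1/τ)·E[W] + c_τ·Var(W). -/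
open MeasureTheory ProbabilityTheory

lemma exp_le_quad_of_nonpos {y : ℝ} (hy : y ≤ 0) : Real.exp y ≤ 1 + y + y^2/2 := by
  set f : ℝ → ℝ := fun x => 1 + x + x^2/2 - Real.exp x with hf
  have hder : ∀ x : ℝ, HasDerivAt f (1 + x - Real.exp x) x := by
    intro x
    have h1 : HasDerivAt (fun x : ℝ => 1 + x + x^2/2) (1 + x) x := by
      have := ((hasDerivAt_id x).const_add 1).add ((hasDerivAt_pow 2 x).div_const 2)
      exact this.congr_deriv (by norm_num)
    exact (h1.sub (Real.hasDerivAt_exp x))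
  have hanti : AntitoneOn f (Set.Iic 0) := by
    apply antitoneOn_of_deriv_nonpos (convex_Iic 0)
    · exact ((continuous_const.add continuous_id).add ((continuous_pow 2).div_const 2)).sub
        Real.continuous_exp |>.continuousOn
    · intro x hx
      exact (hder x).differentiableAt.differentiableWithinAt
    · intro x hx
      rw [(hder x).deriv]
      have := Real.add_one_le_exp x
      linarith
  have h0 : f y ≥ f 0 := hanti hy (le_refl (0:ℝ)) hy -- membership?
  simp [hf] at h0
  linarith

lemma exp_le_bennett_pos {s y : ℝ} (hs : 0 < s) (h0 : 0 ≤ y) (hys : y ≤ s) :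
    Real.exp y ≤ 1 + y + (y/s)^2 * (Real.exp s - 1 - s) := by
  have hexp : ∀ x : ℝ, Real.exp x = ∑' n : ℕ, x ^ n / (n.factorial : ℝ) := fun x => by
    rw [Real.exp_eq_exp_ℝ, NormedSpace.exp_eq_tsum_div]
  set t2 : ℝ := (y/s)^2 with ht2
  set d : ℕ → ℝ := fun n => if n = 0 then 1 - t2 else if n = 1 then y - t2*s else 0 with hd
  have hd0 : ∀ n ∉ ({0,1} : Finset ℕ), d n = 0 := by
    intro n hn
    simp only [Finset.mem_insert, Finset.mem_singleton, not_or] at hn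
    simp [hd, hn.1, hn.2]
  have hdsum : Summable d := summable_of_ne_finset_zero hd0
  have hdval : ∑' n, d n = (1 - t2) + (y - t2*s) := by
    rw [tsum_eq_sum hd0]; simp [hd]
  have hssum := Real.summable_pow_div_factorial s
  have hb : Summable (fun n : ℕ => t2 * (s^n/(n.factorial : ℝ)) + d n) :=
    (hssum.mul_left t2).add hdsum
  have hts : 0 ≤ y / s := div_nonneg h0 hs.le
  have hts1 : y / s ≤ 1 := (div_le_one hs).mpr hys
  have hle : ∀ n : ℕ, y^n/(n.factorial : ℝ) ≤ t2*(s^n/(n.factorial : ℝ)) + d n := by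
    intro n
    match n with
    | 0 => simp [hd]
    | 1 => simp [hd]
    | (k+2) =>
      have h2 : d (k+2) = 0 := by simp [hd]
      have hyn : y^(k+2) ≤ t2 * s^(k+2) := by
        have hys' : y^(k+2) = (y/s)^(k+2) * s^(k+2) := by
          rw [div_pow]; field_simp
        rw [hys', ht2]
        apply mul_le_mul_of_nonneg_right _ (pow_nonneg hs.le _)
        exact pow_le_pow_of_le_one hts hts1 (by omega)
      rw [h2, add_zero, ← mul_div_assoc]
      gcongr
  have hmain := Summable.tsum_le_tsum hle (Real.summable_pow_div_factorial y) hb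
  rw [Summable.tsum_add (hssum.mul_left t2) hdsum, tsum_mul_left, hdval, ← hexp y, ← hexp s] at hmain
  calc Real.exp y ≤ t2 * Real.exp s + ((1 - t2) + (y - t2*s)) := hmain
    _ = 1 + y + (y/s)^2 * (Real.exp s - 1 - s) := by rw [ht2]; ring

lemma exp_le_bennett {s y : ℝ} (hs : 0 < s) (hys : y ≤ s) :
    Real.exp y ≤ 1 + y + (y/s)^2 * (Real.exp s - 1 - s) := by
  rcases le_or_gt 0 y with h0 | h0
  · exact exp_le_bennett_pos hs h0 hys
  · have h1 : Real.exp y ≤ 1 + y + y^2/2 := exp_le_quad_of_nonpos h0.le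
    have h2 : s^2/2 ≤ Real.exp s - 1 - s := by
      have := Real.quadratic_le_exp_of_nonneg hs.le
      linarith
    have h3 : y^2/2 ≤ (y/s)^2 * (Real.exp s - 1 - s) := by
      have h4 : (y/s)^2 * (s^2/2) = y^2/2 := by
        rw [div_pow]; field_simp
      calc y^2/2 = (y/s)^2 * (s^2/2) := h4.symm
        _ ≤ (y/s)^2 * (Real.exp s - 1 - s) :=
            mul_le_mul_of_nonneg_left h2 (sq_nonneg _)
    linarith



/-- Bennett-type bound on the log-MGF of a `[0,1]`-valued random variable:
`log E[exp(W/τ)] ≤ (1/τ)·E[W] + c_τ·Var(W)` with `c_τ = e^{1/τ} − 1 − 1/τ`. -/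
theorem stmt9 {Ω : Type*} [MeasurableSpace Ω]
    (μ : Measure Ω) [IsProbabilityMeasure μ]
    (W : Ω → ℝ) (hWmeas : Measurable W)
    (hW : ∀ ω, W ω ∈ Set.Icc (0:ℝ) 1)
    (τ : ℝ) (hτ : 0 < τ) :
    Real.log (∫ ω, Real.exp (W ω / τ) ∂μ)
      ≤ (1 / τ) * (∫ ω, W ω ∂μ)
        + (Real.exp (1 / τ) - 1 - 1 / τ) * variance W μ := by
  set s := 1/τ with hsdef
  have hs : 0 < s := by positivity
  set c := Real.exp s - 1 - s with hcdef
  have hc : 0 ≤ c := by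
    have := Real.add_one_le_exp s
    rw [hcdef]; linarith
  have hWaes : AEStronglyMeasurable W μ := hWmeas.aestronglyMeasurable
  have hWint : Integrable W μ := by
    apply (integrable_const (1:ℝ)).mono' hWaes
    filter_upwards with ω
    rw [Real.norm_eq_abs, abs_le]
    exact ⟨by linarith [(hW ω).1], (hW ω).2⟩
  have hW2 : MemLp W 2 μ := memLp_of_bounded (ae_of_all _ hW) hWaes 2
  set m := ∫ ω, W ω ∂μ with hm
  have hm0 : 0 ≤ m := integral_nonneg (fun ω => (hW ω).1)
  have hVar : variance W μ = ∫ ω, (W ω - m)^2 ∂μ := by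
    rw [variance_eq_integral hWmeas.aemeasurable]
  have hsq : Integrable (fun ω => (W ω - m)^2) μ := by
    have := (hW2.sub (memLp_const m)).integrable_sq
    simpa using this
  have hWm : Integrable (fun ω => W ω - m) μ := hWint.sub (integrable_const m)
  have hbd : ∀ ω, s * (W ω - m) ≤ s := by
    intro ω
    have h1 : W ω - m ≤ 1 := by linarith [(hW ω).2]
    calc s * (W ω - m) ≤ s * 1 := mul_le_mul_of_nonneg_left h1 hs.le
      _ = s := mul_one s
  have hpt : ∀ ω, Real.exp (s * (W ω - m)) ≤ 1 + s*(W ω - m) + c * (W ω - m)^2 := by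
    intro ω
    have h := exp_le_bennett hs (hbd ω)
    have hq : (s * (W ω - m) / s)^2 = (W ω - m)^2 := by
      rw [mul_div_cancel_left₀ _ hs.ne']
    rw [hq] at h
    calc Real.exp (s * (W ω - m)) ≤ 1 + s*(W ω - m) + (W ω - m)^2 * (Real.exp s - 1 - s) := h
      _ = 1 + s*(W ω - m) + c * (W ω - m)^2 := by rw [hcdef]; ring
  have hexpint : Integrable (fun ω => Real.exp (s * (W ω - m))) μ := by
    apply (integrable_const (Real.exp s)).mono'
      (((hWmeas.sub measurable_const).const_mul s).exp).aestronglyMeasurable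
    filter_upwards with ω
    rw [Real.norm_eq_abs, abs_of_pos (Real.exp_pos _)]
    exact Real.exp_le_exp.mpr (hbd ω)
  have hrhsint : Integrable (fun ω => 1 + s*(W ω - m) + c*(W ω - m)^2) μ :=
    ((integrable_const 1).add (hWm.const_mul s)).add (hsq.const_mul c)
  have hint1 : ∫ ω, Real.exp (s*(W ω - m)) ∂μ ≤ 1 + c * variance W μ := by
    calc ∫ ω, Real.exp (s*(W ω - m)) ∂μ
        ≤ ∫ ω, (1 + s*(W ω - m) + c*(W ω - m)^2) ∂μ :=
          integral_mono hexpint hrhsint hpt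
      _ = 1 + c * variance W μ := by
          have i1 : Integrable (fun ω => 1 + s*(W ω - m)) μ :=
            (integrable_const 1).add (hWm.const_mul s)
          have e1 : ∫ ω, (1 + s*(W ω - m) + c*(W ω - m)^2) ∂μ
              = (∫ ω, (1 + s*(W ω - m)) ∂μ) + ∫ ω, c*(W ω - m)^2 ∂μ :=
            integral_add i1 (hsq.const_mul c)
          have e2 : ∫ ω, (1 + s*(W ω - m)) ∂μ
              = (∫ _ω, (1:ℝ) ∂μ) + ∫ ω, s*(W ω - m) ∂μ :=
            integral_add (integrable_const 1) (hWm.const_mul s)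
          have e3 : ∫ ω, (W ω - m) ∂μ = (∫ ω, W ω ∂μ) - ∫ _ω, m ∂μ :=
            integral_sub hWint (integrable_const m)
          have e4 : ∫ ω, s*(W ω - m) ∂μ = s * ∫ ω, (W ω - m) ∂μ :=
            integral_const_mul s _
          have e5 : ∫ ω, c*(W ω - m)^2 ∂μ = c * ∫ ω, (W ω - m)^2 ∂μ :=
            integral_const_mul c _
          rw [e1, e2, e4, e3, e5, ← hVar]
          simp [← hm]
  have hfacto : ∀ ω, Real.exp (W ω / τ) = Real.exp (s*m) * Real.exp (s*(W ω - m)) := by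
    intro ω
    rw [← Real.exp_add]
    congr 1
    rw [hsdef]
    field_simp
    ring
  have hIeq : ∫ ω, Real.exp (W ω / τ) ∂μ
      = Real.exp (s*m) * ∫ ω, Real.exp (s*(W ω - m)) ∂μ := by
    simp_rw [hfacto]
    rw [integral_const_mul]
  have hfinal : ∫ ω, Real.exp (W ω / τ) ∂μ ≤ Real.exp (s*m + c * variance W μ) := by
    rw [hIeq, Real.exp_add]
    apply mul_le_mul_of_nonneg_left _ (Real.exp_pos _).le
    calc ∫ ω, Real.exp (s*(W ω - m)) ∂μ ≤ 1 + c * variance W μ := hint1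
      _ ≤ Real.exp (c * variance W μ) := by
          linarith [Real.add_one_le_exp (c * variance W μ)]
  have hint : Integrable (fun ω => Real.exp (W ω / τ)) μ :=
    (hexpint.const_mul (Real.exp (s*m))).congr (ae_of_all _ fun ω => (hfacto ω).symm)
  have hpos : 0 < ∫ ω, Real.exp (W ω / τ) ∂μ := by
    have h1 : (1:ℝ) = ∫ _ω, (1:ℝ) ∂μ := by simp
    have h2 : ∫ _ω, (1:ℝ) ∂μ ≤ ∫ ω, Real.exp (W ω / τ) ∂μ := by
      apply integral_mono (integrable_const 1) hint
      intro ω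
      exact Real.one_le_exp (div_nonneg (hW ω).1 hτ.le)
    linarith
  rw [Real.log_le_iff_le_exp hpos]
  exact hfinal
end

section
/- (Value approximation bound) Let r : ℝ^d × 𝒮 → [0,1] be L_r-Lipschitz in its first argument, τ > 0, and c_τ = e^{1/τ} − 1 − 1/τ. Under the conditional independence assumptions above, with V = log E[exp(r(X0; s)/τ) | X_t = x_t, Y = y] and V̂ = r(x̃^η; s)/τ where x̃^η = x̂_{0|t}(x_t) + η Σ_{0|t}(x_t) A^T(y − A x̂_{0|t}(x_t)), we have |V − V̂| ≤ c_τ·Var(r(X0;s) | x_t, y) + (L_r/τ)·(√(Var(X0 | x_t, y)) + √(Var(X0 | x_t))·√(c_4^η)), where c_4^η = 1 + CV² + η²‖A^T(y − Ax̂_{0|t})‖²_{Σ_{0|t}} − 2η⟨A(x̂_{0|t,Y} − x̂_{0|t}), y − A x̂_{0|t}⟩. -/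
open MeasureTheory ProbabilityTheory
open scoped ENNReal NNReal

set_option maxHeartbeats 1000000

lemma aux_nonneg_of_deriv (F F' : ℝ → ℝ) (hd : ∀ t, HasDerivAt F (F' t) t)
    (h0 : F 0 = 0) (hF' : ∀ t, 0 ≤ t → 0 ≤ F' t) : ∀ t, 0 ≤ t → 0 ≤ F t := by
  intro t ht
  have hmono : MonotoneOn F (Set.Ici (0:ℝ)) := by
    apply monotoneOn_of_deriv_nonneg (convex_Ici 0)
    · exact fun x _ => (hd x).differentiableAt.continuousAt.continuousWithinAt
    · exact fun x _ => (hd x).differentiableAt.differentiableWithinAt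
    · intro x hx
      rw [(hd x).deriv]
      exact hF' x (le_of_lt (by simpa [interior_Ici] using hx))
  have := hmono Set.self_mem_Ici (show t ∈ Set.Ici (0:ℝ) from ht) ht
  rwa [h0] at this

lemma aux_exp_quad_neg {t : ℝ} (ht : t ≤ 0) : Real.exp t ≤ 1 + t + t^2/2 := by
  have key : ∀ v : ℝ, 0 ≤ v → 0 ≤ 1 - v + v^2/2 - Real.exp (-v) := by
    apply aux_nonneg_of_deriv _ (fun v => -1 + v + Real.exp (-v))
    · intro v
      have h1 : HasDerivAt (fun v : ℝ => Real.exp (-v)) (Real.exp (-v) * (-1)) v :=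
        (hasDerivAt_neg v).exp
      have h2 := (((hasDerivAt_id v).const_sub 1).add ((hasDerivAt_pow 2 v).div_const 2)).sub h1
      refine h2.congr_deriv ?_
      push_cast
      ring
    · norm_num
    · intro v hv
      have := Real.add_one_le_exp (-v)
      linarith
  have := key (-t) (by linarith)
  have h2 : (-t)^2 = t^2 := by ring
  rw [h2, neg_neg] at this
  linarith

lemma aux_G {x : ℝ} (hx : 0 ≤ x) : 0 ≤ (x - 1) * Real.exp x + 1 := by
  rcases le_or_gt 1 x with h | h
  · nlinarith [Real.exp_pos x]
  · have h1 := Real.add_one_le_exp (-x)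
    have h2 : Real.exp (-x) = (Real.exp x)⁻¹ := Real.exp_neg x
    have h3 : (1 - x) * Real.exp x ≤ 1 := by
      rw [h2] at h1
      have hp := Real.exp_pos x
      calc (1 - x) * Real.exp x ≤ (Real.exp x)⁻¹ * Real.exp x := by
            apply mul_le_mul_of_nonneg_right _ hp.le
            linarith
        _ = 1 := inv_mul_cancel₀ hp.ne'
    nlinarith
  
lemma aux_H {x : ℝ} (hx : 0 ≤ x) : 0 ≤ (x - 2) * Real.exp x + x + 2 := by
  have key : ∀ v : ℝ, 0 ≤ v → 0 ≤ (v - 2) * Real.exp v + v + 2 := by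
    apply aux_nonneg_of_deriv _ (fun v => (v - 1) * Real.exp v + 1)
    · intro v
      have h2 := ((((hasDerivAt_id v).sub_const 2).mul (Real.hasDerivAt_exp v)).add
        (hasDerivAt_id v)).add_const 2
      refine h2.congr_deriv ?_
      simp only [id_eq]
      ring
    · norm_num
    · exact fun v hv => aux_G hv
  exact key x hx

lemma aux_psi_mono {x b : ℝ} (hx : 0 < x) (hxb : x ≤ b) :
    (Real.exp x - 1 - x) / x^2 ≤ (Real.exp b - 1 - b) / b^2 := by
  have hder : ∀ t : ℝ, 0 < t → HasDerivAt (fun t => (Real.exp t - 1 - t) / t^2)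
      (((Real.exp t - 1) * t^2 - (Real.exp t - 1 - t) * (2 * t)) / (t^2)^2) t := by
    intro t ht
    have hN : HasDerivAt (fun t : ℝ => Real.exp t - 1 - t) (Real.exp t - 1) t := by
      have := ((Real.hasDerivAt_exp t).sub_const 1).sub (hasDerivAt_id t)
      exact this
    have hD : HasDerivAt (fun t : ℝ => t^2) ((2:ℕ) * t^(2-1)) t := hasDerivAt_pow 2 t
    have := hN.div hD (by positivity)
    refine this.congr_deriv ?_
    push_cast
    ring_nf
  have hmono : MonotoneOn (fun t => (Real.exp t - 1 - t) / t^2) (Set.Ici x) := by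
    apply monotoneOn_of_deriv_nonneg (convex_Ici x)
    · intro t ht
      exact (hder t (lt_of_lt_of_le hx ht)).differentiableAt.continuousAt.continuousWithinAt
    · intro t ht
      rw [interior_Ici] at ht
      exact (hder t (hx.trans ht)).differentiableAt.differentiableWithinAt
    · intro t ht
      rw [interior_Ici] at ht
      have htpos : 0 < t := hx.trans ht
      rw [(hder t htpos).deriv]
      apply div_nonneg _ (by positivity)
      have hnum : (Real.exp t - 1) * t^2 - (Real.exp t - 1 - t) * (2 * t)
          = t * ((t - 2) * Real.exp t + t + 2) := by ring
      rw [hnum]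
      exact mul_nonneg htpos.le (aux_H htpos.le)
  exact hmono Set.self_mem_Ici (show b ∈ Set.Ici x from hxb) hxb

lemma aux_exp_le {b x : ℝ} (hb : 0 < b) (hx : x ≤ b) :
    Real.exp x ≤ 1 + x + (Real.exp b - 1 - b) / b^2 * x^2 := by
  have hc : 1/2 ≤ (Real.exp b - 1 - b) / b^2 := by
    have := Real.quadratic_le_exp_of_nonneg hb.le
    rw [le_div_iff₀ (by positivity)]
    nlinarith
  rcases lt_trichotomy x 0 with h | h | h
  · have := aux_exp_quad_neg h.le
    nlinarith [sq_nonneg x]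
  · simp [h]
  · have hkey := aux_psi_mono h hx
    rw [div_le_div_iff₀ (by positivity) (by positivity)] at hkey
    have hb2 : (0:ℝ) < b^2 := by positivity
    have h6 : Real.exp x - 1 - x ≤ (Real.exp b - 1 - b) / b^2 * x^2 := by
      rw [div_mul_eq_mul_div, le_div_iff₀ hb2]
      linarith
    linarith

lemma aux_amgm (a b : ℝ) : |a| * |b| ≤ 1/2 * (a^2 + b^2) := by
  nlinarith [sq_nonneg (|a| - |b|), sq_abs a, sq_abs b, abs_nonneg a, abs_nonneg b]

lemma aux_cs {α : Type*} [MeasurableSpace α] (μ : Measure α) (h k : α → ℝ)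
    (hh2 : Integrable (fun x => h x ^ 2) μ) (hk2 : Integrable (fun x => k x ^ 2) μ)
    (hhk : Integrable (fun x => h x * k x) μ) :
    (∫ x, h x * k x ∂μ)^2 ≤ (∫ x, h x ^ 2 ∂μ) * (∫ x, k x ^ 2 ∂μ) := by
  have hknn : 0 ≤ ∫ x, k x ^ 2 ∂μ := integral_nonneg fun x => sq_nonneg _
  rcases eq_or_lt_of_le hknn with hB | hB
  · have hk0 : (fun x => k x ^ 2) =ᵐ[μ] 0 := by
      rw [← integral_eq_zero_iff_of_nonneg (fun x => sq_nonneg (k x)) hk2]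
      exact hB.symm
    have hhk0 : (fun x => h x * k x) =ᵐ[μ] 0 := by
      filter_upwards [hk0] with x hx
      have : k x = 0 := by
        have : k x ^ 2 = 0 := hx
        exact pow_eq_zero_iff (n := 2) (by norm_num) |>.mp this
      simp [this]
    rw [integral_congr_ae hhk0]
    simp [← hB]
  · set B := ∫ x, k x ^ 2 ∂μ with hBdef
    set t := (∫ x, h x * k x ∂μ) / B with ht
    have key : 0 ≤ ∫ x, (h x - t * k x)^2 ∂μ := integral_nonneg fun x => sq_nonneg _
    have expand : ∫ x, (h x - t * k x)^2 ∂μ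
        = (∫ x, h x ^ 2 ∂μ) - 2 * t * (∫ x, h x * k x ∂μ) + t^2 * B := by
      have e : (fun x => (h x - t * k x)^2)
          = fun x => (h x ^ 2 - (2 * t) * (h x * k x)) + t^2 * (k x ^ 2) := by
        funext x; ring
      have i2 : Integrable (fun x => 2 * t * (h x * k x)) μ := hhk.const_mul _
      have i3 : Integrable (fun x => t ^ 2 * k x ^ 2) μ := hk2.const_mul _
      have i1 : Integrable (fun x => h x ^ 2 - 2 * t * (h x * k x)) μ := hh2.sub i2
      rw [e, integral_add i1 i3, integral_sub hh2 i2, integral_const_mul, integral_const_mul]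
    rw [expand] at key
    have htB : t * B = ∫ x, h x * k x ∂μ := div_mul_cancel₀ _ hB.ne'
    have h1 : t^2 * B = t * (∫ x, h x * k x ∂μ) := by rw [← htB]; ring
    rw [h1] at key
    nlinarith [key, htB, hB]

lemma aux_vcs {α : Type*} [MeasurableSpace α] (μ : Measure α) {E : Type*}
    [NormedAddCommGroup E] [InnerProductSpace ℝ E] [CompleteSpace E]
    (g : α → ℝ) (u : α → E) (hu : AEStronglyMeasurable u μ)
    (hgu : Integrable (fun x => g x • u x) μ)
    (hg2 : Integrable (fun x => g x ^ 2) μ)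
    (hu2 : Integrable (fun x => ‖u x‖ ^ 2) μ) :
    ‖∫ x, g x • u x ∂μ‖^2 ≤ (∫ x, g x ^ 2 ∂μ) * (∫ x, ‖u x‖ ^ 2 ∂μ) := by
  set v := ∫ x, g x • u x ∂μ with hv
  have hks : ∀ x, (inner ℝ v (u x) : ℝ) ^ 2 ≤ ‖v‖^2 * ‖u x‖^2 := by
    intro x
    have h1 : |(inner ℝ v (u x) : ℝ)| ≤ ‖v‖ * ‖u x‖ := abs_real_inner_le_norm v (u x)
    nlinarith [abs_nonneg (inner ℝ v (u x) : ℝ), sq_abs (inner ℝ v (u x) : ℝ),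
      norm_nonneg v, norm_nonneg (u x)]
  have hasm : AEStronglyMeasurable (fun x => (inner ℝ v (u x) : ℝ)) μ :=
    AEStronglyMeasurable.inner aestronglyMeasurable_const hu
  have hk2 : Integrable (fun x => (inner ℝ v (u x) : ℝ)^2) μ := by
    refine Integrable.mono' (hu2.const_mul (‖v‖^2)) (hasm.mul hasm |>.congr ?_) ?_
    · filter_upwards with x
      simp only [Pi.mul_apply]
      ring
    · filter_upwards with x
      rw [Real.norm_eq_abs, abs_of_nonneg (sq_nonneg _)]
      exact hks x
  have hhk : Integrable (fun x => g x * (inner ℝ v (u x) : ℝ)) μ := by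
    have e : (fun x => g x * (inner ℝ v (u x) : ℝ)) = fun x => (inner ℝ v (g x • u x) : ℝ) := by
      funext x; rw [real_inner_smul_right]
    rw [e]
    exact hgu.const_inner v
  have hvsq : ‖v‖^2 = ∫ x, g x * (inner ℝ v (u x) : ℝ) ∂μ := by
    have h1 : ‖v‖^2 = (inner ℝ v v : ℝ) := (real_inner_self_eq_norm_sq v).symm
    rw [h1]
    nth_rewrite 2 [hv]
    rw [← integral_inner hgu v]
    congr 1
    funext x
    rw [real_inner_smul_right]
  have hcs := aux_cs μ g (fun x => (inner ℝ v (u x) : ℝ)) hg2 hk2 hhk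
  have hik : ∫ x, (inner ℝ v (u x) : ℝ)^2 ∂μ ≤ ‖v‖^2 * ∫ x, ‖u x‖^2 ∂μ := by
    rw [← integral_const_mul]
    exact integral_mono hk2 (hu2.const_mul _) hks
  have hg2nn : 0 ≤ ∫ x, g x ^ 2 ∂μ := integral_nonneg fun x => sq_nonneg _
  have hu2nn : 0 ≤ ∫ x, ‖u x‖ ^ 2 ∂μ := integral_nonneg fun x => sq_nonneg _
  rcases eq_or_ne (‖v‖) 0 with h0 | h0
  · rw [h0]
    simpa using mul_nonneg hg2nn hu2nn
  · have hvpos : 0 < ‖v‖^2 := by positivity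
    nlinarith [hcs, hik, hvsq, hvpos, hg2nn,
      mul_le_mul_of_nonneg_left hik hg2nn]

/-- Value approximation bound (Proposition 2 of the paper). `ν2` is the conditional law of
`X0` given `X_t = x_t`, `P` is the likelihood `x0 ↦ p(y|x0)`, and `ν1 = ν2` tilted by the
normalized likelihood `f = P/E_{ν2}[P]` is the conditional law of `X0` given
`(X_t,Y) = (x_t,y)` (Bayes). With `[0,1]`-valued `L_r`-Lipschitz reward `r(·;s)`,
`V = log E_{ν1}[exp(r(X0;s)/τ)]`, `x̃^η = x̂_{0|t} + η Σ_{0|t} Aᵀ(y − A x̂_{0|t})` and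
`V̂ = r(x̃^η;s)/τ`:
`|V − V̂| ≤ c_τ·Var(r(X0;s)|x_t,y) + (L_r/τ)(√Var(X0|x_t,y) + √Var(X0|x_t)·√c₄^η)`. -/
theorem stmt17 {d d' : ℕ} {S : Type*}
    (ν1 ν2 : Measure (EuclideanSpace ℝ (Fin d)))
    [IsProbabilityMeasure ν1] [IsProbabilityMeasure ν2]
    (r : EuclideanSpace ℝ (Fin d) → S → ℝ) (s : S) (τ Lr : ℝ)
    (hτ : 0 < τ) (hLr : 0 ≤ Lr)
    (hr01 : ∀ x s', r x s' ∈ Set.Icc (0:ℝ) 1)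
    (hrLip : ∀ s' x x', |r x s' - r x' s'| ≤ Lr * ‖x - x'‖)
    (hrmeas : Measurable fun x => r x s)
    (P : EuclideanSpace ℝ (Fin d) → ℝ) (hPnn : ∀ x, 0 ≤ P x) (hPmeas : Measurable P)
    (hP : Integrable P ν2) (hP2 : Integrable (fun x => (P x) ^ 2) ν2)
    (hEP : 0 < ∫ x, P x ∂ν2)
    (hBayes : ν1 = ν2.withDensity (fun x => ENNReal.ofReal (P x / ∫ x', P x' ∂ν2)))
    (A : EuclideanSpace ℝ (Fin d) →L[ℝ] EuclideanSpace ℝ (Fin d'))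
    (y : EuclideanSpace ℝ (Fin d')) (η : ℝ)
    (hX1 : Integrable (fun x => x) ν1) (hX2 : Integrable (fun x => x) ν2)
    (xhatty : EuclideanSpace ℝ (Fin d)) (hxhatty : xhatty = ∫ x, x ∂ν1)
    (xhatt : EuclideanSpace ℝ (Fin d)) (hxhatt : xhatt = ∫ x, x ∂ν2)
    (w : EuclideanSpace ℝ (Fin d)) (hw : w = ContinuousLinearMap.adjoint A (y - A xhatt))
    (Sigw : EuclideanSpace ℝ (Fin d))
    (hSig : Sigw = ∫ x, (inner ℝ (x - xhatt) w : ℝ) • (x - xhatt) ∂ν2)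
    (xtil : EuclideanSpace ℝ (Fin d)) (hxtil : xtil = xhatt + η • Sigw)
    (hint1 : Integrable (fun x => ‖x - xhatty‖ ^ 2) ν1)
    (hint2 : Integrable (fun x => ‖x - xhatt‖ ^ 2) ν2)
    (hint3 : Integrable (fun x => (inner ℝ (x - xhatt) w : ℝ) ^ 2) ν2)
    (hint4 : Integrable (fun x => (inner ℝ (x - xhatt) w : ℝ) • (x - xhatt)) ν2)
    (c4 : ℝ)
    (hc4 : c4 = 1 + variance P ν2 / (∫ x, P x ∂ν2) ^ 2
        + η ^ 2 * (∫ x, (inner ℝ (x - xhatt) w : ℝ) ^ 2 ∂ν2)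
        - 2 * η * (inner ℝ (A (xhatty - xhatt)) (y - A xhatt) : ℝ)) :
    |Real.log (∫ x, Real.exp (r x s / τ) ∂ν1) - r xtil s / τ|
      ≤ (Real.exp (1 / τ) - 1 - 1 / τ) * variance (fun x => r x s) ν1
        + (Lr / τ) * (Real.sqrt (∫ x, ‖x - xhatty‖ ^ 2 ∂ν1)
            + Real.sqrt (∫ x, ‖x - xhatt‖ ^ 2 ∂ν2) * Real.sqrt c4) := by
  have hb : (0:ℝ) < 1/τ := by positivity
  -- ======== basic facts about r ========
  have hRint : Integrable (fun x => r x s) ν1 := by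
    refine Integrable.mono' (integrable_const (1:ℝ)) hrmeas.aestronglyMeasurable ?_
    filter_upwards with x
    rw [Real.norm_eq_abs, abs_of_nonneg (hr01 x s).1]
    exact (hr01 x s).2
  set μr := ∫ x, r x s ∂ν1 with hμrdef
  have hμr0 : 0 ≤ μr := integral_nonneg fun x => (hr01 x s).1
  have hμr1 : μr ≤ 1 := by
    have := integral_mono hRint (integrable_const (1:ℝ)) (fun x => (hr01 x s).2)
    simpa using this
  -- ======== Term 1 : Bennett-type bound ========
  have hgint : Integrable (fun x => r x s / τ) ν1 := hRint.div_const τ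
  have hμg : ∫ x, r x s / τ ∂ν1 = μr / τ := integral_div τ _
  have hgmb : ∀ x : EuclideanSpace ℝ (Fin d), r x s / τ - μr / τ ≤ 1/τ := by
    intro x
    have h1 : r x s / τ ≤ 1/τ := by gcongr; exact (hr01 x s).2
    have h2 : (0:ℝ) ≤ μr/τ := by positivity
    linarith
  have hgmlb : ∀ x : EuclideanSpace ℝ (Fin d), -(1/τ) ≤ r x s / τ - μr / τ := by
    intro x
    have h1 : (0:ℝ) ≤ r x s / τ := div_nonneg (hr01 x s).1 hτ.le
    have h2 : μr / τ ≤ 1/τ := by gcongr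
    linarith
  have hsub_int : Integrable (fun x => r x s / τ - μr / τ) ν1 := hgint.sub (integrable_const _)
  have hmean0 : ∫ x, (r x s / τ - μr/τ) ∂ν1 = 0 := by
    rw [integral_sub hgint (integrable_const _), hμg, integral_const]
    simp
  have hsq_int : Integrable (fun x => (r x s / τ - μr/τ)^2) ν1 := by
    refine Integrable.mono' (integrable_const ((1/τ)^2))
      (((hrmeas.div_const τ).sub_const (μr/τ)).pow_const 2).aestronglyMeasurable ?_
    filter_upwards with x
    rw [Real.norm_eq_abs, abs_of_nonneg (sq_nonneg _)]
    exact sq_le_sq' (hgmlb x) (hgmb x)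
  have hexp_int : Integrable (fun x => Real.exp (r x s / τ - μr/τ)) ν1 := by
    refine Integrable.mono' (integrable_const (Real.exp (1/τ)))
      (Real.measurable_exp.comp ((hrmeas.div_const τ).sub_const (μr/τ))).aestronglyMeasurable ?_
    filter_upwards with x
    rw [Real.norm_eq_abs, abs_of_pos (Real.exp_pos _)]
    exact Real.exp_le_exp.mpr (hgmb x)
  have hI1 : 1 ≤ ∫ x, Real.exp (r x s / τ - μr/τ) ∂ν1 := by
    have hpt : ∀ x : EuclideanSpace ℝ (Fin d),
        1 + (r x s/τ - μr/τ) ≤ Real.exp (r x s/τ - μr/τ) := by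
      intro x
      have := Real.add_one_le_exp (r x s/τ - μr/τ)
      linarith
    have j1 : Integrable (fun x => 1 + (r x s / τ - μr/τ)) ν1 := by
      exact (integrable_const _).add hsub_int
    have h3 := integral_mono j1 hexp_int hpt
    rw [integral_add (integrable_const _) hsub_int, hmean0, integral_const] at h3
    simpa using h3
  have hI2 : ∫ x, Real.exp (r x s/τ - μr/τ) ∂ν1
      ≤ 1 + ((Real.exp (1/τ) - 1 - 1/τ)/(1/τ)^2) * ∫ x, (r x s/τ - μr/τ)^2 ∂ν1 := by
    have hpt : ∀ x : EuclideanSpace ℝ (Fin d), Real.exp (r x s/τ - μr/τ)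
        ≤ 1 + (r x s/τ - μr/τ) + ((Real.exp (1/τ) - 1 - 1/τ)/(1/τ)^2) * (r x s/τ - μr/τ)^2 :=
      fun x => aux_exp_le hb (hgmb x)
    have j1 : Integrable (fun x => 1 + (r x s / τ - μr/τ)) ν1 := by
      exact (integrable_const _).add hsub_int
    have j2 : Integrable (fun x => (1 + (r x s / τ - μr/τ))
        + ((Real.exp (1/τ) - 1 - 1/τ)/(1/τ)^2) * (r x s / τ - μr/τ)^2) ν1 := by
      exact j1.add (hsq_int.const_mul _)
    have h3 := integral_mono hexp_int j2 hpt
    rw [integral_add j1 (hsq_int.const_mul _),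
      integral_add (integrable_const _) hsub_int, hmean0, integral_const,
      integral_const_mul] at h3
    simpa using h3
  have hgmem : MemLp (fun x => r x s / τ) 2 ν1 := by
    have hbd : ∀ᵐ x ∂ν1, (fun x => r x s / τ) x ∈ Set.Icc (0:ℝ) (1/τ) :=
      ae_of_all _ fun x => by
        show r x s / τ ∈ Set.Icc (0:ℝ) (1/τ)
        exact Set.mem_Icc.mpr
          ⟨div_nonneg (hr01 x s).1 hτ.le, by gcongr; exact (hr01 x s).2⟩
    exact memLp_of_bounded hbd (hrmeas.div_const τ).aestronglyMeasurable 2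
  have hvar_eq : ∫ x, (r x s/τ - μr/τ)^2 ∂ν1 = variance (fun x => r x s / τ) ν1 := by
    rw [variance_eq_integral hgmem.aestronglyMeasurable.aemeasurable]
    simp only [Pi.pow_apply, Pi.sub_apply, hμg]
  have hvar_mul : variance (fun x => r x s / τ) ν1 = (1/τ)^2 * variance (fun x => r x s) ν1 := by
    have e : (fun x : EuclideanSpace ℝ (Fin d) => r x s / τ) = fun x => (1/τ) * r x s := by
      funext x; ring
    rw [e, variance_const_mul]
  have hIexp : ∫ x, Real.exp (r x s / τ) ∂ν1
      = Real.exp (μr/τ) * ∫ x, Real.exp (r x s/τ - μr/τ) ∂ν1 := by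
    rw [← integral_const_mul]
    congr 1
    funext x
    rw [← Real.exp_add]
    ring_nf
  have hIpos : (0:ℝ) < ∫ x, Real.exp (r x s/τ - μr/τ) ∂ν1 := lt_of_lt_of_le one_pos hI1
  have hlog : Real.log (∫ x, Real.exp (r x s / τ) ∂ν1)
      = μr/τ + Real.log (∫ x, Real.exp (r x s/τ - μr/τ) ∂ν1) := by
    rw [hIexp, Real.log_mul (Real.exp_ne_zero _) hIpos.ne', Real.log_exp]
  have hT1 : |Real.log (∫ x, Real.exp (r x s / τ) ∂ν1) - μr/τ|
      ≤ (Real.exp (1/τ) - 1 - 1/τ) * variance (fun x => r x s) ν1 := by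
    rw [hlog, add_sub_cancel_left, abs_of_nonneg (Real.log_nonneg hI1)]
    have h1 := Real.log_le_sub_one_of_pos hIpos
    have h2 : ((Real.exp (1/τ) - 1 - 1/τ)/(1/τ)^2) * ((1/τ)^2 * variance (fun x => r x s) ν1)
        = (Real.exp (1/τ) - 1 - 1/τ) * variance (fun x => r x s) ν1 := by
      field_simp
    calc Real.log (∫ x, Real.exp (r x s/τ - μr/τ) ∂ν1)
        ≤ ((Real.exp (1/τ) - 1 - 1/τ)/(1/τ)^2) * ∫ x, (r x s/τ - μr/τ)^2 ∂ν1 := by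
          linarith
      _ = (Real.exp (1/τ) - 1 - 1/τ) * variance (fun x => r x s) ν1 := by
          rw [hvar_eq, hvar_mul, h2]
  -- ======== Term 2 : Lipschitz Cauchy-Schwarz ========
  have hndty_int : Integrable (fun x => ‖x - xhatty‖) ν1 := (hX1.sub (integrable_const _)).norm
  have havg : ∫ x, ‖x - xhatty‖ ∂ν1 ≤ Real.sqrt (∫ x, ‖x - xhatty‖^2 ∂ν1) := by
    apply Real.le_sqrt_of_sq_le
    have h3 := aux_cs ν1 (fun x => ‖x - xhatty‖) (fun _ => (1:ℝ)) hint1 (integrable_const _)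
      (by simpa using hndty_int)
    simpa using h3
  have hT2' : |(∫ x, r x s ∂ν1) - r xhatty s| ≤ Lr * Real.sqrt (∫ x, ‖x - xhatty‖^2 ∂ν1) := by
    have h1 : (∫ x, r x s ∂ν1) - r xhatty s = ∫ x, (r x s - r xhatty s) ∂ν1 := by
      rw [integral_sub hRint (integrable_const _), integral_const]
      simp
    rw [h1]
    calc |∫ x, (r x s - r xhatty s) ∂ν1| ≤ ∫ x, |r x s - r xhatty s| ∂ν1 := by
          simpa [Real.norm_eq_abs] using
            norm_integral_le_integral_norm (μ := ν1) (fun x => r x s - r xhatty s)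
      _ ≤ ∫ x, Lr * ‖x - xhatty‖ ∂ν1 :=
          integral_mono (hRint.sub (integrable_const _)).abs (hndty_int.const_mul _)
            (fun x => hrLip s x xhatty)
      _ = Lr * ∫ x, ‖x - xhatty‖ ∂ν1 := integral_const_mul _ _
      _ ≤ Lr * Real.sqrt (∫ x, ‖x - xhatty‖^2 ∂ν1) := mul_le_mul_of_nonneg_left havg hLr
  have hT2 : |μr/τ - r xhatty s/τ| ≤ (Lr/τ) * Real.sqrt (∫ x, ‖x - xhatty‖^2 ∂ν1) := by
    rw [div_sub_div_same, abs_div, abs_of_pos hτ]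
    calc |μr - r xhatty s|/τ ≤ (Lr * Real.sqrt (∫ x, ‖x - xhatty‖^2 ∂ν1))/τ := by gcongr
      _ = (Lr/τ) * Real.sqrt (∫ x, ‖x - xhatty‖^2 ∂ν1) := by ring
  -- ======== Term 3 : covariance tilting ========
  set EP := ∫ x, P x ∂ν2 with hEPdef
  have hfnn : ∀ x, 0 ≤ P x / EP := fun x => div_nonneg (hPnn x) hEP.le
  have hFmeas : Measurable (fun x => Real.toNNReal (P x / EP)) :=
    (hPmeas.div_const EP).real_toNNReal
  have hν1 : ν1 = ν2.withDensity (fun x => ((Real.toNNReal (P x / EP) : ℝ≥0) : ℝ≥0∞)) := hBayes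
  have hconvE : ∀ gg : EuclideanSpace ℝ (Fin d) → EuclideanSpace ℝ (Fin d),
      ∫ x, gg x ∂ν1 = ∫ x, (P x / EP) • gg x ∂ν2 := by
    intro gg
    rw [hν1, integral_withDensity_eq_integral_smul hFmeas]
    congr 1
    funext x
    rw [NNReal.smul_def, Real.coe_toNNReal _ (hfnn x)]
  have hconvR : ∀ gg : EuclideanSpace ℝ (Fin d) → ℝ,
      ∫ x, gg x ∂ν1 = ∫ x, (P x / EP) * gg x ∂ν2 := by
    intro gg
    rw [hν1, integral_withDensity_eq_integral_smul hFmeas]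
    congr 1
    funext x
    rw [NNReal.smul_def, Real.coe_toNNReal _ (hfnn x), smul_eq_mul]
  have hu_int1 : Integrable (fun x => x - xhatt) ν1 := hX1.sub (integrable_const _)
  have hu_int2 : Integrable (fun x => x - xhatt) ν2 := hX2.sub (integrable_const _)
  have hfu_int : Integrable (fun x => (P x / EP) • (x - xhatt)) ν2 := by
    have h1 : Integrable (fun x => x - xhatt)
        (ν2.withDensity fun x => ((Real.toNNReal (P x/EP) : ℝ≥0) : ℝ≥0∞)) := hν1 ▸ hu_int1
    have h2 := (integrable_withDensity_iff_integrable_smul hFmeas).mp h1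
    refine h2.congr (ae_of_all _ fun x => ?_)
    show (P x / EP).toNNReal • (x - xhatt) = (P x / EP) • (x - xhatt)
    rw [NNReal.smul_def, Real.coe_toNNReal _ (hfnn x)]
  have hmean2 : ∫ x, (x - xhatt) ∂ν2 = 0 := by
    rw [integral_sub hX2 (integrable_const _), integral_const, hxhatt]
    simp
  have hmean1 : ∫ x, (x - xhatt) ∂ν1 = xhatty - xhatt := by
    rw [integral_sub hX1 (integrable_const _), integral_const, hxhatty]
    simp
  have hm : ∫ x, (P x / EP) • (x - xhatt) ∂ν2 = xhatty - xhatt := by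
    rw [← hconvE (fun x => x - xhatt), hmean1]
  have hinner_comm : ∀ x : EuclideanSpace ℝ (Fin d),
      (inner ℝ (x - xhatt) w : ℝ) = (inner ℝ w (x - xhatt) : ℝ) := fun x => real_inner_comm _ _
  have hφint2 : Integrable (fun x => (inner ℝ (x - xhatt) w : ℝ)) ν2 := hu_int2.inner_const w
  have hφmean2 : ∫ x, (inner ℝ (x - xhatt) w : ℝ) ∂ν2 = 0 := by
    simp_rw [hinner_comm]
    rw [integral_inner hu_int2 w, hmean2, inner_zero_right]
  have hφint1 : Integrable (fun x => (inner ℝ (x - xhatt) w : ℝ)) ν1 := hu_int1.inner_const w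
  have hφmean1 : ∫ x, (inner ℝ (x - xhatt) w : ℝ) ∂ν1
      = (inner ℝ (A (xhatty - xhatt)) (y - A xhatt) : ℝ) := by
    simp_rw [hinner_comm]
    rw [integral_inner hu_int1 w, hmean1, real_inner_comm, hw,
      ContinuousLinearMap.adjoint_inner_right]
  have hfφ : ∫ x, (P x / EP) * (inner ℝ (x - xhatt) w : ℝ) ∂ν2
      = (inner ℝ (A (xhatty - xhatt)) (y - A xhatt) : ℝ) := by
    rw [← hconvR (fun x => (inner ℝ (x - xhatt) w : ℝ)), hφmean1]
  have hfint : Integrable (fun x => P x / EP) ν2 := hP.div_const EP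
  have hfmean : ∫ x, P x / EP ∂ν2 = 1 := by
    rw [integral_div]
    exact div_self hEP.ne'
  have hf2int : Integrable (fun x => (P x / EP)^2) ν2 := by
    have e : (fun x => (P x / EP)^2) = fun x => (EP^2)⁻¹ * P x ^ 2 := by
      funext x
      rw [div_pow]
      ring
    rw [e]
    exact hP2.const_mul _
  have hPmem : MemLp P 2 ν2 := (memLp_two_iff_integrable_sq hPmeas.aestronglyMeasurable).mpr hP2
  have hf2mean : ∫ x, (P x / EP)^2 ∂ν2 = 1 + variance P ν2 / EP^2 := by
    have hvar := variance_eq_sub hPmem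
    have h1 : ∫ x, (P x / EP)^2 ∂ν2 = (∫ x, P x ^ 2 ∂ν2) / EP^2 := by
      simp_rw [div_pow]
      exact integral_div _ _
    have h2 : ν2[P ^ 2] = ∫ x, P x ^ 2 ∂ν2 := by
      congr 1
    have h3 : ν2[P] = EP := rfl
    rw [h1]
    rw [h2, h3] at hvar
    rw [hvar]
    field_simp
    ring
  -- measurability of φ
  have hφmeas : Measurable (fun x : EuclideanSpace ℝ (Fin d) => (inner ℝ (x - xhatt) w : ℝ)) := by
    have : Continuous (fun x : EuclideanSpace ℝ (Fin d) => (inner ℝ (x - xhatt) w : ℝ)) :=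
      (continuous_id.sub continuous_const).inner continuous_const
    exact this.measurable
  have hfφ_int : Integrable (fun x => (P x/EP) * (inner ℝ (x - xhatt) w : ℝ)) ν2 := by
    refine Integrable.mono' ((hf2int.add hint3).const_mul (1/2 : ℝ))
      (((hPmeas.div_const EP).mul hφmeas).aestronglyMeasurable) ?_
    filter_upwards with x
    rw [Real.norm_eq_abs, abs_mul]
    exact aux_amgm _ _
  have e2 : (fun x => (P x/EP - 1 - η * (inner ℝ (x - xhatt) w : ℝ))^2)
      = fun x => ((((P x/EP)^2 + η^2 * (inner ℝ (x - xhatt) w : ℝ)^2)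
          - (2*η) * ((P x/EP) * (inner ℝ (x - xhatt) w : ℝ))) - (2:ℝ) * (P x/EP))
          + (2*η * (inner ℝ (x - xhatt) w : ℝ) + 1) := by
    funext x
    ring
  have i1 : Integrable (fun x => (P x/EP)^2 + η^2 * (inner ℝ (x - xhatt) w : ℝ)^2) ν2 :=
    hf2int.add (hint3.const_mul _)
  have i2 : Integrable (fun x => ((P x/EP)^2 + η^2 * (inner ℝ (x - xhatt) w : ℝ)^2)
      - (2*η) * ((P x/EP) * (inner ℝ (x - xhatt) w : ℝ))) ν2 := i1.sub (hfφ_int.const_mul _)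
  have i3 : Integrable (fun x => (((P x/EP)^2 + η^2 * (inner ℝ (x - xhatt) w : ℝ)^2)
      - (2*η) * ((P x/EP) * (inner ℝ (x - xhatt) w : ℝ))) - (2:ℝ) * (P x/EP)) ν2 :=
    i2.sub (hfint.const_mul _)
  have i4 : Integrable (fun x => 2*η * (inner ℝ (x - xhatt) w : ℝ) + 1) ν2 :=
    (hφint2.const_mul _).add (integrable_const _)
  have hg02_int : Integrable (fun x => (P x/EP - 1 - η * (inner ℝ (x - xhatt) w : ℝ))^2) ν2 := by
    rw [e2]
    exact i3.add i4
  have hg02 : ∫ x, (P x/EP - 1 - η * (inner ℝ (x - xhatt) w : ℝ))^2 ∂ν2 = c4 - 1 := by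
    rw [e2, integral_add i3 i4, integral_sub i2 (hfint.const_mul _),
      integral_sub i1 (hfφ_int.const_mul _), integral_add hf2int (hint3.const_mul _),
      integral_add (hφint2.const_mul _) (integrable_const _),
      integral_const_mul, integral_const_mul, integral_const_mul, integral_const_mul,
      hf2mean, hfφ, hfmean, hφmean2, integral_const, hc4]
    simp [measure_univ]
    ring
  have hc4m1 : 0 ≤ c4 - 1 := by
    rw [← hg02]
    exact integral_nonneg fun x => sq_nonneg _
  have hg0u_int : Integrable
      (fun x => (P x/EP - 1 - η * (inner ℝ (x - xhatt) w : ℝ)) • (x - xhatt)) ν2 := by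
    have e : (fun x => (P x/EP - 1 - η * (inner ℝ (x - xhatt) w : ℝ)) • (x - xhatt))
        = fun x => ((P x/EP) • (x - xhatt) - (x - xhatt))
            - η • ((inner ℝ (x - xhatt) w : ℝ) • (x - xhatt)) := by
      funext x
      rw [sub_smul, sub_smul, one_smul, mul_smul]
    rw [e]
    have k1 : Integrable (fun x => (P x/EP) • (x - xhatt) - (x - xhatt)) ν2 := by
      exact hfu_int.sub hu_int2
    have k2 : Integrable (fun x => η • ((inner ℝ (x - xhatt) w : ℝ) • (x - xhatt))) ν2 := by
      exact hint4.smul η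
    exact k1.sub k2
  have hg0u : ∫ x, (P x/EP - 1 - η * (inner ℝ (x - xhatt) w : ℝ)) • (x - xhatt) ∂ν2
      = (xhatty - xhatt) - η • Sigw := by
    have e : (fun x => (P x/EP - 1 - η * (inner ℝ (x - xhatt) w : ℝ)) • (x - xhatt))
        = fun x => ((P x/EP) • (x - xhatt) - (x - xhatt))
            - η • ((inner ℝ (x - xhatt) w : ℝ) • (x - xhatt)) := by
      funext x
      rw [sub_smul, sub_smul, one_smul, mul_smul]
    have k1 : Integrable (fun x => (P x/EP) • (x - xhatt) - (x - xhatt)) ν2 := by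
      exact hfu_int.sub hu_int2
    have k2 : Integrable (fun x => η • ((inner ℝ (x - xhatt) w : ℝ) • (x - xhatt))) ν2 := by
      exact hint4.smul η
    rw [e, integral_sub k1 k2,
      integral_sub hfu_int hu_int2, hm, hmean2, integral_smul, ← hSig, sub_zero]
  have hucont : AEStronglyMeasurable (fun x : EuclideanSpace ℝ (Fin d) => x - xhatt) ν2 :=
    (continuous_id.sub continuous_const).aestronglyMeasurable
  have hvcs := aux_vcs ν2 (fun x => P x/EP - 1 - η * (inner ℝ (x - xhatt) w : ℝ))
    (fun x => x - xhatt) hucont hg0u_int hg02_int hint2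
  rw [hg0u, hg02] at hvcs
  have hU : 0 ≤ ∫ x, ‖x - xhatt‖^2 ∂ν2 := integral_nonneg fun x => sq_nonneg _
  have hxdiff : xhatty - xtil = (xhatty - xhatt) - η • Sigw := by
    rw [hxtil]
    abel
  have hnorm3 : ‖xhatty - xtil‖
      ≤ Real.sqrt (∫ x, ‖x - xhatt‖^2 ∂ν2) * Real.sqrt c4 := by
    rw [← Real.sqrt_mul hU]
    apply Real.le_sqrt_of_sq_le
    rw [hxdiff]
    calc ‖(xhatty - xhatt) - η • Sigw‖^2
        ≤ (c4 - 1) * ∫ x, ‖x - xhatt‖^2 ∂ν2 := hvcs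
      _ ≤ (∫ x, ‖x - xhatt‖^2 ∂ν2) * c4 := by nlinarith
  have hT3 : |r xhatty s / τ - r xtil s / τ|
      ≤ (Lr/τ) * (Real.sqrt (∫ x, ‖x - xhatt‖^2 ∂ν2) * Real.sqrt c4) := by
    rw [div_sub_div_same, abs_div, abs_of_pos hτ]
    have h1 : |r xhatty s - r xtil s| ≤ Lr * ‖xhatty - xtil‖ := hrLip s xhatty xtil
    have h2 : Lr * ‖xhatty - xtil‖
        ≤ Lr * (Real.sqrt (∫ x, ‖x - xhatt‖^2 ∂ν2) * Real.sqrt c4) :=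
      mul_le_mul_of_nonneg_left hnorm3 hLr
    calc |r xhatty s - r xtil s| / τ
        ≤ (Lr * (Real.sqrt (∫ x, ‖x - xhatt‖^2 ∂ν2) * Real.sqrt c4)) / τ := by
          exact (div_le_div_iff_of_pos_right hτ).mpr (h1.trans h2)
      _ = (Lr/τ) * (Real.sqrt (∫ x, ‖x - xhatt‖^2 ∂ν2) * Real.sqrt c4) := by ring
  -- ======== assembly ========
  have tri1 := abs_sub_le (Real.log (∫ x, Real.exp (r x s / τ) ∂ν1)) (μr/τ) (r xtil s / τ)
  have tri2 := abs_sub_le (μr/τ) (r xhatty s / τ) (r xtil s / τ)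
  have hring : (Lr/τ) * (Real.sqrt (∫ x, ‖x - xhatty‖ ^ 2 ∂ν1)
      + Real.sqrt (∫ x, ‖x - xhatt‖ ^ 2 ∂ν2) * Real.sqrt c4)
      = (Lr/τ) * Real.sqrt (∫ x, ‖x - xhatty‖ ^ 2 ∂ν1)
        + (Lr/τ) * (Real.sqrt (∫ x, ‖x - xhatt‖ ^ 2 ∂ν2) * Real.sqrt c4) := by ring
  linarith [hT1, hT2, hT3, tri1, tri2]
end
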